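/- arXiv:1406.1717 — 2 statements merged into one kernel-verified Lean document; each statement's English description precedes it below -/
import Mathlib

section
/- Let α be a linear order, h and b natural numbers with b ≥ 1, and for each j < b let z^{(j)} : Fin (h+1) → α be a block of h+1 values. Define the vector x of length b(3h+1) over WithBot (WithTop α) as the concatenation of b segments, where segment j consists of h copies of ⊥, followed by the coercions of z^{(j)}_0, …, z^{(j)}_h, followed by h copies of ⊤. Then the median filter of x with window size 2h+1 simultaneously sorts all b blocks: for every j < b and every s with 0 ≤ s ≤ h, the output entry y_{j(3h+1)+s} equals the coercion of the element of rank s of the multiset {z^{(j)}_0, …, z^{(j)}_h}. -/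
private lemma drop_mul_flatMap {β γ : Type*} (f : β → List γ) (m : ℕ)
    (hf : ∀ a, (f a).length = m) :
    ∀ (j : ℕ) (l : List β), (l.flatMap f).drop (j * m) = (l.drop j).flatMap f := by
  intro j
  induction j with
  | zero => simp
  | succ j ih =>
    intro l
    cases l with
    | nil => simp
    | cons a l =>
      rw [List.flatMap_cons, List.drop_append, hf]
      rw [List.drop_eq_nil_of_le (by rw [hf]; exact Nat.le_mul_of_pos_left m (Nat.succ_pos j)), List.nil_append]
      have : (j + 1) * m - m = j * m := by ring_nf; omega
      rw [this, ih l]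
      simp

private lemma median_aux {α : Type*} [LinearOrder α] {β : Type*} [LinearOrder β]
    [OrderBot β] [OrderTop β] (c : α → β) (hmono : ∀ a b : α, a ≤ b → c a ≤ c b)
    (h b : ℕ) (z : Fin b → Fin (h + 1) → α) (j : Fin b) (s : ℕ) (hs : s ≤ h) :
    (Multiset.sort
        (↑(((((List.finRange b).flatMap (fun j' =>
                List.replicate h (⊥ : β) ++ (List.ofFn (z j')).map c ++
                List.replicate h (⊤ : β))).drop
              ((j : ℕ) * (3 * h + 1) + s)).take (2 * h + 1))) : Multiset β) (· ≤ ·))[h]?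
    = ((Multiset.sort (↑(List.ofFn (z j)) : Multiset α) (· ≤ ·))[s]?).map c := by
  set f : Fin b → List β := fun j' =>
    List.replicate h (⊥ : β) ++ (List.ofFn (z j')).map c ++ List.replicate h (⊤ : β) with hf
  have hlenf : ∀ j', (f j').length = 3 * h + 1 := by
    intro j'; simp [hf]; omega
  have hwin : ((((List.finRange b).flatMap f).drop ((j : ℕ) * (3 * h + 1) + s)).take (2 * h + 1))
      = List.replicate (h - s) (⊥ : β) ++ (List.ofFn (z j)).map c ++
          List.replicate s (⊤ : β) := by
    have hjlt : (j : ℕ) < (List.finRange b).length := by simp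
    have h2 : (List.finRange b).drop (j : ℕ) = j :: (List.finRange b).drop ((j : ℕ) + 1) := by
      rw [List.drop_eq_getElem_cons hjlt]
      congr 1
      simp [List.getElem_finRange]
    have h3 : ((List.finRange b).flatMap f).drop ((j : ℕ) * (3 * h + 1) + s)
        = (f j ++ ((List.finRange b).drop ((j : ℕ) + 1)).flatMap f).drop s := by
      rw [← List.drop_drop, drop_mul_flatMap f (3 * h + 1) hlenf, h2, List.flatMap_cons]
    rw [h3, List.drop_append, hlenf]
    have e0 : s - (3 * h + 1) = 0 := by omega
    rw [e0, List.drop_zero, List.take_append, List.length_drop, hlenf]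
    have e1 : 2 * h + 1 - (3 * h + 1 - s) = 0 := by omega
    rw [e1, List.take_zero, List.append_nil, hf]
    rw [List.drop_append, List.drop_append,
      List.drop_replicate, List.length_replicate, List.length_append, List.length_replicate,
      List.length_map, List.length_ofFn]
    have e2 : s - h = 0 := by omega
    have e3 : s - (h + (h + 1)) = 0 := by omega
    rw [e2, e3, List.drop_zero, List.drop_zero]
    rw [List.take_append,
      List.take_of_length_le (by simp; omega),
      List.length_append, List.length_replicate, List.length_map, List.length_ofFn]
    have e4 : 2 * h + 1 - (h - s + (h + 1)) = s := by omega
    rw [e4, List.take_replicate]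
    congr 2
    omega
  rw [hwin]
  set W : List α := Multiset.sort (↑(List.ofFn (z j)) : Multiset α) (· ≤ ·) with hW
  have hWlen : W.length = h + 1 := by
    rw [hW, Multiset.length_sort]; simp
  have hWperm : W.Perm (List.ofFn (z j)) := by
    rw [← Multiset.coe_eq_coe, hW, Multiset.sort_eq]
  have hsorted : Multiset.sort
      (↑(List.replicate (h - s) (⊥ : β) ++ (List.ofFn (z j)).map c ++
          List.replicate s (⊤ : β)) : Multiset β) (· ≤ ·)
      = List.replicate (h - s) (⊥ : β) ++ W.map c ++ List.replicate s (⊤ : β) := by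
    refine (fun hp h1 h2 => List.Perm.eq_of_pairwise' (r := (· ≤ ·)) h1 h2 hp) ?_ ?_ ?_
    · refine List.Perm.trans (Multiset.coe_eq_coe.mp (Multiset.sort_eq _ _)) ?_
      exact List.Perm.append (List.Perm.append (List.Perm.refl _)
        ((hWperm.map _).symm)) (List.Perm.refl _)
    · exact Multiset.pairwise_sort _ _
    · rw [List.pairwise_append, List.pairwise_append]
      refine ⟨⟨List.pairwise_replicate.mpr (Or.inr le_rfl), ?_, ?_⟩,
        List.pairwise_replicate.mpr (Or.inr le_rfl), ?_⟩
      · exact List.Pairwise.map _ hmono (Multiset.pairwise_sort _ _)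
      · intro a ha b' hb'
        rw [List.eq_of_mem_replicate ha]; exact bot_le
      · intro a ha b' hb'
        rw [List.eq_of_mem_replicate hb']; exact le_top
  rw [hsorted]
  rw [List.getElem?_append_left
      (by rw [List.length_append, List.length_replicate, List.length_map, hWlen]; omega),
    List.getElem?_append_right (by rw [List.length_replicate]; omega)]
  have : h - (List.replicate (h - s) (⊥ : β)).length = s := by
    rw [List.length_replicate]; omega
  rw [this, List.getElem?_map]

/-- Concatenate `b ≥ 1` segments, where segment `j` consists of `h` copies
of `⊥`, the block `z j : Fin (h+1) → α` (coerced into `WithBot (WithTop α)`), and `h` copies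
of `⊤`.  The resulting vector `x` has length `b(3h+1)`.  Then the median filter of `x` with
window size `2h+1` simultaneously sorts all `b` blocks: for every `j < b` and `0 ≤ s ≤ h`,
the output entry at position `j(3h+1)+s` (the element of rank `h` of the window multiset
starting at that position) equals the element of rank `s` of the multiset `{z j 0, …, z j h}`. -/
theorem median_filter_sorts_all_blocks {α : Type*} [LinearOrder α] (h b : ℕ) (hb : 1 ≤ b)
    (z : Fin b → Fin (h + 1) → α) :
    ∀ j : Fin b, ∀ s : ℕ, s ≤ h →
      (Multiset.sort
          (↑(((((List.finRange b).flatMap (fun j' =>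
                  List.replicate h (⊥ : WithBot (WithTop α)) ++
                  (List.ofFn (z j')).map
                    (fun a => ((↑(↑a : WithTop α) : WithBot (WithTop α)))) ++
                  List.replicate h (⊤ : WithBot (WithTop α)))).drop
                ((j : ℕ) * (3 * h + 1) + s)).take (2 * h + 1))) :
            Multiset (WithBot (WithTop α))) (· ≤ ·))[h]? =
      ((Multiset.sort (↑(List.ofFn (z j)) : Multiset α) (· ≤ ·))[s]?).map
        (fun a => ((↑(↑a : WithTop α) : WithBot (WithTop α)))) := by
  intro j s hs
  simp only [bind_pure_comp, Functor.map, List.map_map, Option.map_map]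
  exact median_aux _ (fun a b hab => by simpa using hab) h b z j s hs
end

section
/- Assume the invariant setting with S_A ≠ ∅, and write p_A = max S_A. Assume a_A < p_A, every element of S_B is less than a_B, a_B is less than every element of L_A \ S_A, and a_B is less than every element of L_B \ S_B (case 2 of the case analysis). Then: S'_A = S_A \ {a_A}; S'_B = S_B; a_B is the B-side peek, i.e. a_B = min((L_B ∪ {a_B}) \ S'_B), and a_B is less than every element of (L_A \ {a_A}) \ S'_A; and H_h(L') = (H_h(L_A ∪ L_B) \ {a_A}) ∪ {a_B} = S'_A ∪ S_B ∪ {a_B}. -/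
/-- `smallSet m L` is `H_m(L)`: the set of the `m` smallest elements of the finset `L`
(the first `m` entries of the increasing enumeration of `L`). -/
def smallSet {α : Type*} [LinearOrder α] (m : ℕ) (L : Finset α) : Finset α :=
  ((L.sort (· ≤ ·)).take m).toFinset


lemma smallSet_subset {α : Type*} [LinearOrder α] (m : ℕ) (L : Finset α) :
    smallSet m L ⊆ L := by
  intro x hx
  simp only [smallSet, List.mem_toFinset] at hx
  have := List.take_subset m _ hx
  rwa [Finset.mem_sort] at this

lemma smallSet_card {α : Type*} [LinearOrder α] {m : ℕ} {L : Finset α} (hm : m ≤ L.card) :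
    (smallSet m L).card = m := by
  rw [smallSet, List.toFinset_card_of_nodup ((List.take_sublist m _).nodup (L.sort_nodup _))]
  simp [List.length_take, Finset.length_sort, hm]

lemma smallSet_lt {α : Type*} [LinearOrder α] {m : ℕ} {L : Finset α} {x y : α}
    (hx : x ∈ smallSet m L) (hy : y ∈ L) (hy' : y ∉ smallSet m L) : x < y := by
  have hs : List.Pairwise (· < ·) (L.sort (· ≤ ·)) := L.sortedLT_sort.pairwise
  have hsplit : L.sort (· ≤ ·) = (L.sort (· ≤ ·)).take m ++ (L.sort (· ≤ ·)).drop m :=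
    (List.take_append_drop m _).symm
  have hx' : x ∈ (L.sort (· ≤ ·)).take m := by simpa [smallSet] using hx
  have hy2 : y ∈ (L.sort (· ≤ ·)).drop m := by
    have hyl : y ∈ (L.sort (· ≤ ·)) := by rwa [Finset.mem_sort]
    rw [hsplit] at hyl
    rcases List.mem_append.mp hyl with h | h
    · exact absurd (by simpa [smallSet] using h) hy'
    · exact h
  rw [hsplit, List.pairwise_append] at hs
  exact hs.2.2 x hx' y hy2

lemma smallSet_eq_of {α : Type*} [LinearOrder α] {m : ℕ} {L S : Finset α}
    (hS : S ⊆ L) (hc : S.card = m)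
    (hlt : ∀ x ∈ S, ∀ y ∈ L, y ∉ S → x < y) : smallSet m L = S := by
  have hm : m ≤ L.card := hc ▸ Finset.card_le_card hS
  by_contra hne
  have hcT : (smallSet m L).card = m := smallSet_card hm
  have h1 : ((smallSet m L) \ S).Nonempty := by
    rw [Finset.sdiff_nonempty]
    intro hsub
    exact hne (Finset.eq_of_subset_of_card_le hsub (by rw [hcT, hc]))
  have h2 : (S \ smallSet m L).Nonempty := by
    rw [Finset.sdiff_nonempty]
    intro hsub
    exact hne (Finset.eq_of_subset_of_card_le hsub (by rw [hcT, hc])).symm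
  obtain ⟨x, hx⟩ := h1
  obtain ⟨y, hy⟩ := h2
  rw [Finset.mem_sdiff] at hx hy
  have hxy : y < x := hlt y hy.1 x (smallSet_subset _ _ hx.1) hx.2
  have hyx : x < y := smallSet_lt hx.1 (hS hy.1) hy.2
  exact absurd hxy (lt_asymm hyx)

/-- case 2 of the case analysis.  Invariant setting: `L_A, L_B` disjoint
with `|L_A| + |L_B| = 2h+1`, `S_A ⊆ L_A`, `S_B ⊆ L_B`, `S_A ∪ S_B = H_h(L_A ∪ L_B)`,
`a_A ∈ L_A`, `a_B ∉ L_A ∪ L_B`; `L' = (L_A \ {a_A}) ∪ L_B ∪ {a_B}`; updated small sets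
`S'_A = H_{|S_A|-1}(L_A \ {a_A})` and `S'_B = H_{|S_B|}(L_B ∪ {a_B})`.
Assume `S_A ≠ ∅`, `a_A < p_A = max S_A`, every element of `S_B` is less than `a_B`, and
`a_B` is less than every element of `L_A \ S_A` and of `L_B \ S_B`.  Then
`S'_A = S_A \ {a_A}`, `S'_B = S_B`, `a_B` is the B-side peek
(`a_B = min((L_B ∪ {a_B}) \ S'_B)`) and is less than every element of
`(L_A \ {a_A}) \ S'_A`, and `H_h(L') = (H_h(L_A ∪ L_B) \ {a_A}) ∪ {a_B} = S'_A ∪ S_B ∪ {a_B}`. -/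
theorem invariant_case2 {α : Type*} [LinearOrder α] (h : ℕ)
    (LA LB SA SB : Finset α) (hdisj : Disjoint LA LB)
    (hcard : LA.card + LB.card = 2 * h + 1)
    (hSA : SA ⊆ LA) (hSB : SB ⊆ LB)
    (hinv : SA ∪ SB = smallSet h (LA ∪ LB))
    (aA aB : α) (haA : aA ∈ LA) (haB : aB ∉ LA ∪ LB)
    (hSAne : SA.Nonempty)
    (h1 : aA < SA.max' hSAne)
    (h2 : ∀ x ∈ SB, x < aB)
    (h3 : ∀ x ∈ LA \ SA, aB < x)
    (h4 : ∀ x ∈ LB \ SB, aB < x) :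
    smallSet (SA.card - 1) (LA \ {aA}) = SA \ {aA} ∧
    smallSet SB.card (LB ∪ {aB}) = SB ∧
    ((LB ∪ {aB}) \ smallSet SB.card (LB ∪ {aB})).min = (aB : WithTop α) ∧
    (∀ x ∈ (LA \ {aA}) \ smallSet (SA.card - 1) (LA \ {aA}), aB < x) ∧
    smallSet h ((LA \ {aA}) ∪ LB ∪ {aB}) = (smallSet h (LA ∪ LB) \ {aA}) ∪ {aB} ∧
    smallSet h ((LA \ {aA}) ∪ LB ∪ {aB}) =
      smallSet (SA.card - 1) (LA \ {aA}) ∪ SB ∪ {aB} := by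
  have haBA : aB ∉ LA := fun hh => haB (Finset.mem_union_left _ hh)
  have haBB : aB ∉ LB := fun hh => haB (Finset.mem_union_right _ hh)
  have hSdisj : Disjoint SA SB := hdisj.mono hSA hSB
  have hcardU : (LA ∪ LB).card = 2 * h + 1 := by
    rw [Finset.card_union_of_disjoint hdisj, hcard]
  have hcross : ∀ x ∈ SA ∪ SB, ∀ y ∈ LA ∪ LB, y ∉ SA ∪ SB → x < y := by
    intro x hx y hy hy'
    exact smallSet_lt (hinv ▸ hx) hy (hinv ▸ hy')
  have hHcard : (SA ∪ SB).card = h := by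
    rw [hinv]; exact smallSet_card (by omega)
  have hSsum : SA.card + SB.card = h := by
    rw [← Finset.card_union_of_disjoint hSdisj, hHcard]
  have haASA : aA ∈ SA := by
    by_contra hna
    have h6 : aA ∉ SA ∪ SB := by
      rw [Finset.mem_union]
      rintro (hh | hh)
      · exact hna hh
      · exact Finset.disjoint_left.mp hdisj haA (hSB hh)
    have := hcross (SA.max' hSAne) (Finset.mem_union_left _ (SA.max'_mem hSAne))
      aA (Finset.mem_union_left _ haA) h6
    exact absurd h1 (not_lt.mpr this.le)
  have haASB : aA ∉ SB := fun hh => Finset.disjoint_left.mp hdisj haA (hSB hh)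
  have haBSB : aB ∉ SB := fun hh => haBB (hSB hh)
  -- notin-H implies aB < y
  have hgt : ∀ y ∈ LA ∪ LB, y ∉ SA ∪ SB → aB < y := by
    intro y hy hy'
    rw [Finset.mem_union] at hy
    rw [Finset.mem_union] at hy'
    push_neg at hy'
    rcases hy with hy | hy
    · exact h3 y (Finset.mem_sdiff.mpr ⟨hy, hy'.1⟩)
    · exact h4 y (Finset.mem_sdiff.mpr ⟨hy, hy'.2⟩)
  have g1 : smallSet (SA.card - 1) (LA \ {aA}) = SA \ {aA} := by
    apply smallSet_eq_of
    · exact Finset.sdiff_subset_sdiff hSA (subset_refl _)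
    · rw [Finset.card_sdiff_of_subset (Finset.singleton_subset_iff.mpr haASA)]; simp
    · intro x hx y hy hy'
      rw [Finset.mem_sdiff, Finset.mem_singleton] at hx hy
      have hyS : y ∉ SA := fun hs => hy' (Finset.mem_sdiff.mpr ⟨hs, by simp [hy.2]⟩)
      refine hcross x (Finset.mem_union_left _ hx.1) y (Finset.mem_union_left _ hy.1) ?_
      rw [Finset.mem_union]
      rintro (hh | hh)
      · exact hyS hh
      · exact Finset.disjoint_left.mp hdisj hy.1 (hSB hh)
  have g2 : smallSet SB.card (LB ∪ {aB}) = SB := by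
    apply smallSet_eq_of
    · exact hSB.trans Finset.subset_union_left
    · rfl
    · intro x hx y hy hy'
      rw [Finset.mem_union, Finset.mem_singleton] at hy
      rcases hy with hy | rfl
      · refine hcross x (Finset.mem_union_right _ hx) y (Finset.mem_union_right _ hy) ?_
        rw [Finset.mem_union]
        rintro (hh | hh)
        · exact Finset.disjoint_right.mp hdisj hy (hSA hh)
        · exact hy' hh
      · exact h2 x hx
  have g3 : ((LB ∪ {aB}) \ smallSet SB.card (LB ∪ {aB})).min = (aB : WithTop α) := by
    rw [g2]
    have hmem : aB ∈ (LB ∪ {aB}) \ SB :=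
      Finset.mem_sdiff.mpr ⟨Finset.mem_union_right _ (Finset.mem_singleton_self _), haBSB⟩
    refine le_antisymm (Finset.min_le hmem) (Finset.le_min ?_)
    intro b hb
    rw [Finset.mem_sdiff, Finset.mem_union, Finset.mem_singleton] at hb
    rcases hb.1 with hb1 | rfl
    · exact_mod_cast (h4 b (Finset.mem_sdiff.mpr ⟨hb1, hb.2⟩)).le
    · exact le_refl _
  have g4 : ∀ x ∈ (LA \ {aA}) \ smallSet (SA.card - 1) (LA \ {aA}), aB < x := by
    intro x hx
    rw [g1, Finset.mem_sdiff, Finset.mem_sdiff, Finset.mem_singleton, Finset.mem_sdiff,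
      Finset.mem_singleton] at hx
    have hxS : x ∉ SA := fun hs => hx.2 ⟨hs, hx.1.2⟩
    exact h3 x (Finset.mem_sdiff.mpr ⟨hx.1.1, hxS⟩)
  have g5 : smallSet h ((LA \ {aA}) ∪ LB ∪ {aB}) = (SA \ {aA}) ∪ SB ∪ {aB} := by
    apply smallSet_eq_of
    · refine Finset.union_subset_union ?_ (subset_refl _)
      exact Finset.union_subset_union (Finset.sdiff_subset_sdiff hSA (subset_refl _)) hSB
    · rw [Finset.card_union_of_disjoint, Finset.card_union_of_disjoint,
        Finset.card_sdiff_of_subset (Finset.singleton_subset_iff.mpr haASA)]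
      · simp only [Finset.card_singleton]
        have : 1 ≤ SA.card := Finset.card_pos.mpr hSAne
        omega
      · exact Finset.disjoint_left.mpr fun x hx =>
          (Finset.disjoint_left.mp hSdisj (Finset.mem_sdiff.mp hx).1)
      · rw [Finset.disjoint_singleton_right, Finset.mem_union, Finset.mem_sdiff]
        rintro (⟨hh, -⟩ | hh)
        · exact haBA (hSA hh)
        · exact haBSB hh
    · intro x hx y hy hy'
      rw [Finset.mem_union, Finset.mem_singleton] at hy hy'
      push_neg at hy'
      have hyaB : y ≠ aB := hy'.2
      have hyL : y ∈ LA ∪ LB := by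
        rcases hy with hy | rfl
        · rw [Finset.mem_union, Finset.mem_sdiff] at hy
          rw [Finset.mem_union]
          rcases hy with ⟨hh, -⟩ | hh
          · exact Or.inl hh
          · exact Or.inr hh
        · exact absurd rfl hyaB
      have hyH : y ∉ SA ∪ SB := by
        rw [Finset.mem_union]
        rintro (hh | hh)
        · have hyne : y ≠ aA := by
            rcases hy with hy | rfl
            · rw [Finset.mem_union, Finset.mem_sdiff, Finset.mem_singleton] at hy
              rcases hy with ⟨-, hne⟩ | hyb
              · exact hne
              · exact fun e => Finset.disjoint_left.mp hdisj haA (e ▸ hyb)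
            · exact absurd rfl hyaB
          exact hy'.1 (Finset.mem_union.mpr (Or.inl (Finset.mem_sdiff.mpr ⟨hh, Finset.mem_singleton.not.mpr hyne⟩)))
        · exact hy'.1 (Finset.mem_union.mpr (Or.inr hh))
      rw [Finset.mem_union, Finset.mem_union, Finset.mem_singleton, Finset.mem_sdiff] at hx
      rcases hx with (⟨hxa, -⟩ | hxb) | rfl
      · exact hcross x (Finset.mem_union_left _ hxa) y hyL hyH
      · exact hcross x (Finset.mem_union_right _ hxb) y hyL hyH
      · exact hgt y hyL hyH
  refine ⟨g1, g2, g3, g4, ?_, ?_⟩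
  · rw [g5, ← hinv, Finset.union_sdiff_distrib,
      Finset.sdiff_singleton_eq_erase aA SB, Finset.erase_eq_of_notMem haASB]
  · rw [g5, g1]
end
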